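/- Given p ∈ (1/2,1) and D ∈ (1-p, 1), for every R ∈ (0, H(1-D)] there exists a unique u ∈ [1-D, 1-D/2) with H(u) - H(u+D-1) = R, and the rate-distortion exponent F(R,D) = D_KL(u‖p) is a strictly increasing function of R on (0, H(1-D)]. -/

import Mathlib

open Real Set

/-- Binary entropy function (base-2 logarithm). -/
noncomputable def binH (u : ℝ) : ℝ := -(u * Real.logb 2 u) - (1 - u) * Real.logb 2 (1 - u)

/-- Binary Kullback-Leibler divergence (base-2 logarithm). -/
noncomputable def klBin (u p : ℝ) : ℝ :=
  u * Real.logb 2 (u / p) + (1 - u) * Real.logb 2 ((1 - u) / (1 - p))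

lemma binH_eq (u : ℝ) : binH u = (Real.negMulLog u + Real.negMulLog (1 - u)) / Real.log 2 := by
  simp only [binH, Real.logb, Real.negMulLog]
  ring

lemma binH_continuous : Continuous binH := by
  have h : binH = fun u => (Real.negMulLog u + Real.negMulLog (1 - u)) / Real.log 2 :=
    funext binH_eq
  rw [h]
  exact (Real.continuous_negMulLog.add (Real.continuous_negMulLog.comp
    (continuous_const.sub continuous_id))).div_const _

lemma binH_zero : binH 0 = 0 := by simp [binH]

lemma binH_symm (x : ℝ) : binH (1 - x) = binH x := by
  simp only [binH, sub_sub_cancel]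
  ring

lemma binH_hasDeriv {u : ℝ} (hu : u ≠ 0) (hu1 : (1:ℝ) - u ≠ 0) :
    HasDerivAt binH ((Real.log (1 - u) - Real.log u) / Real.log 2) u := by
  have h : binH = fun u => (Real.negMulLog u + Real.negMulLog (1 - u)) / Real.log 2 :=
    funext binH_eq
  rw [h]
  have h1 : HasDerivAt Real.negMulLog (-Real.log u - 1) u := Real.hasDerivAt_negMulLog hu
  have hg : HasDerivAt (fun u : ℝ => 1 - u) (-1) u := by
    simpa using (hasDerivAt_id' u).const_sub (1:ℝ)
  have h2 : HasDerivAt (fun u : ℝ => Real.negMulLog (1 - u))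
      ((-Real.log (1 - u) - 1) * (-1)) u :=
    (Real.hasDerivAt_negMulLog hu1).comp u hg
  have : HasDerivAt (fun u => (Real.negMulLog u + Real.negMulLog (1 - u)) / Real.log 2)
      ((-Real.log u - 1 + (-Real.log (1 - u) - 1) * (-1)) / Real.log 2) u :=
    (h1.add h2).div_const (Real.log 2)
  convert this using 1
  ring

theorem rde_exponent_strict_mono (p D : ℝ)
    (hp : p ∈ Set.Ioo (1/2 : ℝ) 1) (hD : D ∈ Set.Ioo (1 - p) 1)
    (hpD : 1 - D / 2 ≤ p) :
    (∀ R ∈ Set.Ioc (0:ℝ) (binH (1 - D)),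
      ∃! u, u ∈ Set.Ico (1 - D) (1 - D / 2) ∧ binH u - binH (u + D - 1) = R) ∧
    (∀ R₁ R₂, R₁ ∈ Set.Ioc (0:ℝ) (binH (1 - D)) → R₂ ∈ Set.Ioc (0:ℝ) (binH (1 - D)) →
      R₁ < R₂ →
      ∀ u₁ u₂, u₁ ∈ Set.Ico (1 - D) (1 - D / 2) → u₂ ∈ Set.Ico (1 - D) (1 - D / 2) →
        binH u₁ - binH (u₁ + D - 1) = R₁ → binH u₂ - binH (u₂ + D - 1) = R₂ →
        klBin u₁ p < klBin u₂ p) := by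
  obtain ⟨hp1, hp2⟩ := hp
  obtain ⟨hD1, hD2⟩ := hD
  have hDpos : 0 < D := by linarith
  set a : ℝ := 1 - D with ha
  set b : ℝ := 1 - D / 2 with hb
  have hab : a < b := by simp only [ha, hb]; linarith
  have ha0 : 0 < a := by simp only [ha]; linarith
  have hb1 : b < 1 := by simp only [hb]; linarith
  have hlog2 : 0 < Real.log 2 := Real.log_pos (by norm_num)
  set h : ℝ → ℝ := fun u => binH u - binH (u + D - 1) with hh
  have hcont : Continuous h := binH_continuous.sub (binH_continuous.comp (by continuity))
  -- h is strictly decreasing on Icc a b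
  have hanti : StrictAntiOn h (Icc a b) := by
    apply strictAntiOn_of_deriv_neg (convex_Icc a b) hcont.continuousOn
    intro x hx
    rw [interior_Icc] at hx
    obtain ⟨hx1, hx2⟩ := hx
    have hx0 : 0 < x := lt_trans ha0 hx1
    have hxb : x < 1 := lt_trans hx2 hb1
    have hy0 : 0 < x + D - 1 := by simp only [ha] at hx1; linarith
    have hy1 : x + D - 1 < D / 2 := by simp only [hb] at hx2; linarith
    have hy2 : 0 < 1 - (x + D - 1) := by linarith
    have hd1 : HasDerivAt binH ((Real.log (1 - x) - Real.log x) / Real.log 2) x :=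
      binH_hasDeriv (ne_of_gt hx0) (by linarith)
    have hg : HasDerivAt (fun u : ℝ => u + D - 1) 1 x := by
      simpa using ((hasDerivAt_id x).add_const D).sub_const 1
    have hd2 : HasDerivAt (fun u => binH (u + D - 1))
        ((Real.log (1 - (x + D - 1)) - Real.log (x + D - 1)) / Real.log 2 * 1) x :=
      by have := (binH_hasDeriv (ne_of_gt hy0) (ne_of_gt hy2)).comp x hg; exact this
    have hder : HasDerivAt h
        ((Real.log (1 - x) - Real.log x) / Real.log 2
          - (Real.log (1 - (x + D - 1)) - Real.log (x + D - 1)) / Real.log 2 * 1) x :=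
      hd1.sub hd2
    rw [hder.deriv]
    have key : Real.log (1 - x) + Real.log (x + D - 1)
        < Real.log x + Real.log (1 - (x + D - 1)) := by
      rw [← Real.log_mul (by linarith) (ne_of_gt hy0), ← Real.log_mul (ne_of_gt hx0) (ne_of_gt hy2)]
      apply Real.log_lt_log (by nlinarith)
      nlinarith
    have : (Real.log (1 - x) - Real.log x
        - (Real.log (1 - (x + D - 1)) - Real.log (x + D - 1))) < 0 := by linarith
    calc (Real.log (1 - x) - Real.log x) / Real.log 2
          - (Real.log (1 - (x + D - 1)) - Real.log (x + D - 1)) / Real.log 2 * 1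
        = (Real.log (1 - x) - Real.log x
          - (Real.log (1 - (x + D - 1)) - Real.log (x + D - 1))) / Real.log 2 := by ring
      _ < 0 := div_neg_of_neg_of_pos this hlog2
  -- klBin · p is strictly decreasing on Icc a b
  set g : ℝ → ℝ := fun u =>
    (u * (Real.log u - Real.log p) + (1 - u) * (Real.log (1 - u) - Real.log (1 - p)))
      / Real.log 2 with hg
  have hkl_eq : ∀ u ∈ Icc a b, klBin u p = g u := by
    intro u hu
    obtain ⟨hu1, hu2⟩ := hu
    have hu0 : 0 < u := lt_of_lt_of_le ha0 hu1
    have hu1' : u < 1 := lt_of_le_of_lt hu2 hb1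
    simp only [klBin, hg, Real.logb, Real.log_div (ne_of_gt hu0) (by positivity),
      Real.log_div (by linarith : (1:ℝ) - u ≠ 0) (by intro hc; nlinarith [hc] : (1:ℝ) - p ≠ 0)]
    ring
  have hganti : StrictAntiOn g (Icc a b) := by
    apply strictAntiOn_of_deriv_neg (convex_Icc a b)
    · apply ContinuousOn.div_const
      apply ContinuousOn.add
      · exact (continuousOn_id.mul ((Real.continuousOn_log.mono (fun x hx => by
          simp only [mem_compl_iff, mem_singleton_iff]
          exact ne_of_gt (lt_of_lt_of_le ha0 hx.1))).sub continuousOn_const))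
      · exact ((continuousOn_const.sub continuousOn_id).mul
          (((Real.continuousOn_log.comp (continuousOn_const.sub continuousOn_id) (fun x hx => by
            simp only [mem_compl_iff, mem_singleton_iff]
            have : x < 1 := lt_of_le_of_lt hx.2 hb1
            intro hc; simp at hc; linarith)).sub continuousOn_const)))
    intro x hx
    rw [interior_Icc] at hx
    obtain ⟨hx1, hx2⟩ := hx
    have hx0 : 0 < x := lt_trans ha0 hx1
    have hxb : x < 1 := lt_trans hx2 hb1
    have hd1 : HasDerivAt (fun u : ℝ => u * (Real.log u - Real.log p))
        (1 * (Real.log x - Real.log p) + x * x⁻¹) x :=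
      (hasDerivAt_id x).mul ((Real.hasDerivAt_log (ne_of_gt hx0)).sub_const _)
    have hs : HasDerivAt (fun u : ℝ => 1 - u) (-1) x := by
      simpa using (hasDerivAt_id' x).const_sub (1:ℝ)
    have hlog1x : HasDerivAt (fun u : ℝ => Real.log (1 - u)) ((1 - x)⁻¹ * (-1)) x :=
      (Real.hasDerivAt_log (by linarith)).comp x hs
    have hd2 : HasDerivAt (fun u : ℝ => (1 - u) * (Real.log (1 - u) - Real.log (1 - p)))
        ((-1) * (Real.log (1 - x) - Real.log (1 - p)) + (1 - x) * ((1 - x)⁻¹ * (-1))) x :=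
      hs.mul (hlog1x.sub_const _)
    have hder : HasDerivAt g
        ((1 * (Real.log x - Real.log p) + x * x⁻¹
          + ((-1) * (Real.log (1 - x) - Real.log (1 - p)) + (1 - x) * ((1 - x)⁻¹ * (-1))))
          / Real.log 2) x :=
      (hd1.add hd2).div_const _
    rw [hder.deriv]
    have hxne : x ≠ 0 := ne_of_gt hx0
    have h1xne : (1:ℝ) - x ≠ 0 := by linarith
    have hsimp : x * x⁻¹ = 1 := by field_simp
    have hsimp2 : (1 - x) * ((1 - x)⁻¹ * (-1)) = -1 := by field_simp
    rw [hsimp, hsimp2]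
    have key : Real.log x + Real.log (1 - p) < Real.log p + Real.log (1 - x) := by
      rw [← Real.log_mul hxne (by intro hc; nlinarith [hc]),
        ← Real.log_mul (by positivity : p ≠ 0) h1xne]
      apply Real.log_lt_log (by nlinarith)
      have hxp : x < p := lt_of_lt_of_le hx2 hpD
      nlinarith
    have : 1 * (Real.log x - Real.log p) + 1
        + ((-1) * (Real.log (1 - x) - Real.log (1 - p)) + -1) < 0 := by linarith
    exact div_neg_of_neg_of_pos this hlog2
  have hklanti : StrictAntiOn (fun u => klBin u p) (Icc a b) := by
    intro x hx y hy hxy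
    show klBin y p < klBin x p
    rw [hkl_eq x hx, hkl_eq y hy]
    exact hganti hx hy hxy
  -- boundary values of h
  have hhb : h b = 0 := by
    have : b + D - 1 = D / 2 := by simp only [hb]; ring
    simp only [hh, this]
    have : binH b = binH (D / 2) := by rw [hb]; exact binH_symm _
    rw [this, sub_self]
  have hha : h a = binH (1 - D) := by
    have : a + D - 1 = 0 := by simp only [ha]; ring
    simp only [hh, this, binH_zero, sub_zero]
    rfl
  constructor
  · intro R hR
    obtain ⟨hR1, hR2⟩ := hR
    have : R ∈ Icc (h b) (h a) := by rw [hhb, hha]; exact ⟨le_of_lt hR1, hR2⟩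
    obtain ⟨u, hu, huR⟩ := intermediate_value_Icc' (le_of_lt hab) hcont.continuousOn this
    have hub : u ≠ b := by
      intro hc
      rw [hc, hhb] at huR
      linarith
    have huIco : u ∈ Ico a b := ⟨hu.1, lt_of_le_of_ne hu.2 hub⟩
    refine ⟨u, ⟨huIco, huR⟩, ?_⟩
    intro v ⟨hvIco, hvR⟩
    have hv : v ∈ Icc a b := ⟨hvIco.1, le_of_lt hvIco.2⟩
    exact hanti.injOn hv hu (by rw [show h v = R from hvR, huR])
  · intro R₁ R₂ hR₁ hR₂ hlt u₁ u₂ hu₁ hu₂ he₁ he₂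
    have hu₁' : u₁ ∈ Icc a b := ⟨hu₁.1, le_of_lt hu₁.2⟩
    have hu₂' : u₂ ∈ Icc a b := ⟨hu₂.1, le_of_lt hu₂.2⟩
    have h21 : u₂ < u₁ := by
      rcases lt_trichotomy u₂ u₁ with hc | hc | hc
      · exact hc
      · exfalso; rw [hc, he₁] at he₂; linarith
      · exfalso
        have h0 := hanti hu₁' hu₂' hc
        have : R₂ < R₁ := by simpa [hh, he₁, he₂] using h0
        linarith
    exact hklanti hu₂' hu₁' h21
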